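/- Let NF_n be the null-filiform Leibniz algebra with [e_i,e_1] = e_{i+1} for 1 ≤ i ≤ n−1. A linear map d : NF_n → NF_n is a derivation if and only if there exist scalars α_1,…,α_n such that d(e_i) = i·α_1·e_i + Σ_{j=i+1}^{n} α_{j−i+1} e_j for all 1 ≤ i ≤ n. -/
import Mathlib

def NFbr (n : ℕ) (x y : Fin n → ℂ) : Fin n → ℂ := fun i =>
  if _ : 1 ≤ (i : ℕ) then
    y ⟨0, Nat.lt_of_le_of_lt (Nat.zero_le _) i.isLt⟩ *
      x ⟨(i : ℕ) - 1, Nat.lt_of_le_of_lt (Nat.sub_le _ _) i.isLt⟩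
  else 0

lemma NFbr_single_left {n : ℕ} (hn : 1 ≤ n) (k : Fin n) (y : Fin n → ℂ) (j : Fin n) :
    NFbr n (Pi.single k 1) y j = y ⟨0, hn⟩ * (if (j : ℕ) = (k : ℕ) + 1 then 1 else 0) := by
  simp only [NFbr]
  split
  · rename_i h
    congr 1
    simp only [Pi.single_apply, Fin.ext_iff, Fin.val_mk]
    split_ifs with h1 h2 h2 <;> first | rfl | omega
  · rename_i h
    rw [if_neg (by omega)]
    ring

lemma NFbr_single_eq {n : ℕ} (hn : 1 ≤ n) (k : Fin n) (hk : (k : ℕ) + 1 < n) :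
    NFbr n (Pi.single k 1) (Pi.single ⟨0, hn⟩ 1) = Pi.single (⟨(k : ℕ) + 1, hk⟩ : Fin n) 1 := by
  funext j
  rw [NFbr_single_left hn, Pi.single_eq_same, Pi.single_apply, one_mul]
  congr 1
  simp [Fin.ext_iff]

noncomputable def NFB (n : ℕ) : (Fin n → ℂ) →ₗ[ℂ] (Fin n → ℂ) →ₗ[ℂ] (Fin n → ℂ) :=
  LinearMap.mk₂ ℂ (NFbr n)
    (fun x x' y => by
      funext i; simp only [NFbr, Pi.add_apply]; split
      · rw [mul_add]
      · rw [add_zero])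
    (fun c x y => by
      funext i
      simp only [NFbr, Pi.smul_apply, smul_eq_mul]; split
      · ring
      · rw [mul_zero])
    (fun x y y' => by
      funext i; simp only [NFbr, Pi.add_apply]; split
      · rw [add_mul]
      · rw [add_zero])
    (fun c x y => by
      funext i
      simp only [NFbr, Pi.smul_apply, smul_eq_mul]; split
      · ring
      · rw [mul_zero])

/-- a linear map `d` on `NF_n` is a derivation iff there are
scalars `α_1, …, α_n` (here `α 0, …, α (n-1)`) with
`d(e_i) = i·α_1·e_i + ∑_{j=i+1}^n α_{j-i+1} e_j`. -/
theorem NF_derivation_characterization (n : ℕ) (hn : 1 ≤ n)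
    (d : (Fin n → ℂ) →ₗ[ℂ] (Fin n → ℂ)) :
    (∀ x y : Fin n → ℂ, d (NFbr n x y) = NFbr n (d x) y + NFbr n x (d y)) ↔
    (∃ α : Fin n → ℂ, ∀ i j : Fin n,
      d (Pi.single i 1) j =
        if j = i then ((i : ℕ) + 1 : ℂ) * α ⟨0, hn⟩
        else if (i : ℕ) < (j : ℕ) then
          α ⟨(j : ℕ) - (i : ℕ), Nat.lt_of_le_of_lt (Nat.sub_le _ _) j.isLt⟩
        else 0) := by
  constructor
  · intro H
    set α : Fin n → ℂ := d (Pi.single ⟨0, hn⟩ 1) with hα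
    refine ⟨α, ?_⟩
    -- fact: d e_l vanishes at 0 for l ≥ 1
    have h0 : ∀ l : Fin n, 1 ≤ (l : ℕ) → d (Pi.single l 1) ⟨0, hn⟩ = 0 := by
      intro l hl
      have hn2 : 1 < n := lt_of_le_of_lt hl l.isLt
      have key := H (Pi.single ⟨0, hn⟩ 1) (Pi.single l 1)
      have hz : NFbr n (Pi.single (⟨0, hn⟩ : Fin n) 1) (Pi.single l 1) = 0 := by
        funext j
        rw [NFbr_single_left hn]
        have : (Pi.single l (1:ℂ) : Fin n → ℂ) ⟨0, hn⟩ = 0 := by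
          rw [Pi.single_apply, if_neg]
          simp only [Fin.ext_iff, Fin.val_mk]
          omega
        rw [this, zero_mul]
        rfl
      rw [hz, map_zero] at key
      have key1 := congrFun key ⟨1, hn2⟩
      simp only [Pi.zero_apply, Pi.add_apply] at key1
      rw [NFbr_single_left hn] at key1
      simp only [NFbr] at key1
      rw [dif_pos (by norm_num : 1 ≤ ((⟨1, hn2⟩ : Fin n) : ℕ))] at key1
      have hne : ∀ (h : 0 < n), (⟨0, h⟩ : Fin n) ≠ l := by
        intro h hc
        rw [Fin.ext_iff] at hc
        simp only [Fin.val_mk] at hc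
        omega
      simp only [Pi.single_apply, if_neg (hne _), zero_mul, zero_add] at key1
      simpa using key1.symm
    -- the recursion
    have hrec : ∀ (k : ℕ) (hk : k + 1 < n) (j : Fin n),
        d (Pi.single (⟨k + 1, hk⟩ : Fin n) 1) j =
          (if h : 1 ≤ (j : ℕ) then
            d (Pi.single (⟨k, Nat.lt_of_succ_lt hk⟩ : Fin n) 1)
              ⟨(j : ℕ) - 1, Nat.lt_of_le_of_lt (Nat.sub_le _ _) j.isLt⟩ else 0) +
          α ⟨0, hn⟩ * (if (j : ℕ) = k + 1 then 1 else 0) := by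
      intro k hk j
      have key := H (Pi.single (⟨k, Nat.lt_of_succ_lt hk⟩ : Fin n) 1) (Pi.single ⟨0, hn⟩ 1)
      rw [NFbr_single_eq hn _ hk] at key
      have key1 := congrFun key j
      simp only [Pi.add_apply] at key1
      rw [NFbr_single_left hn] at key1
      simp only [NFbr] at key1
      rw [key1, Pi.single_eq_same, hα]
      congr 1
      split
      · rw [one_mul]
      · rfl
    have main : ∀ (m : ℕ) (hm : m < n) (j : Fin n),
        d (Pi.single (⟨m, hm⟩ : Fin n) 1) j =
          if j = ⟨m, hm⟩ then ((m : ℂ) + 1) * α ⟨0, hn⟩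
          else if m < (j : ℕ) then
            α ⟨(j : ℕ) - m, Nat.lt_of_le_of_lt (Nat.sub_le _ _) j.isLt⟩
          else 0 := by
      intro m
      induction m with
      | zero =>
        intro hm j
        by_cases hj : j = ⟨0, hm⟩
        · rw [if_pos hj, hj, hα]
          norm_num
        · rw [if_neg hj]
          by_cases h2 : 0 < (j : ℕ)
          · rw [if_pos h2, hα]
            congr 1
          · exact absurd (Fin.ext (by simp only [Fin.val_mk]; omega)) hj
      | succ m ih =>
        intro hm j
        rw [hrec m hm j]
        by_cases hj1 : 1 ≤ (j : ℕ)
        · rw [dif_pos hj1, ih (Nat.lt_of_succ_lt hm)]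
          simp only [Fin.ext_iff, Fin.val_mk]
          split_ifs <;>
            first
              | (push_cast; ring1)
              | (exfalso; omega)
              | (rw [mul_zero, add_zero]; exact congrArg α (Fin.ext (by simp only [Fin.val_mk]; omega)))
        · rw [dif_neg hj1]
          simp only [Fin.ext_iff, Fin.val_mk]
          split_ifs <;>
            first
              | (push_cast; ring1)
              | (exfalso; omega)
    intro i j
    have h := main i.val i.isLt j
    rw [Fin.eta] at h
    exact h
  · rintro ⟨α, hα⟩
    have hsl0 : ∀ (h : 0 < n),
        (Pi.single (⟨0, hn⟩ : Fin n) (1:ℂ) : Fin n → ℂ) ⟨0, h⟩ = 1 := by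
      intro h
      simp [Pi.single_apply, Fin.ext_iff]
    have key : ∀ k l : Fin n,
        d (NFbr n (Pi.single k 1) (Pi.single l 1)) =
          NFbr n (d (Pi.single k 1)) (Pi.single l 1) +
            NFbr n (Pi.single k 1) (d (Pi.single l 1)) := by
      intro k l
      by_cases hl : (l : ℕ) = 0
      · have hl' : l = ⟨0, hn⟩ := Fin.ext (by simp [hl])
        subst hl'
        by_cases hk : (k : ℕ) + 1 < n
        · rw [NFbr_single_eq hn k hk]
          funext j
          rw [Pi.add_apply, NFbr_single_left hn]
          simp only [NFbr, hα, hsl0, one_mul, Fin.ext_iff, Fin.val_mk]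
          split_ifs <;>
            first
              | (push_cast; ring1)
              | (exfalso; omega)
              | (rw [mul_zero, add_zero];
                 exact congrArg α (Fin.ext (by simp only [Fin.val_mk]; omega)))
        · have hz : NFbr n (Pi.single k 1) (Pi.single (⟨0, hn⟩ : Fin n) 1) = 0 := by
            funext j
            rw [NFbr_single_left hn,
              if_neg (show ¬ (j : ℕ) = (k : ℕ) + 1 by omega), mul_zero]
            rfl
          rw [hz, map_zero]
          funext j
          rw [Pi.zero_apply, Pi.add_apply, NFbr_single_left hn,
            if_neg (show ¬ (j : ℕ) = (k : ℕ) + 1 by omega), mul_zero, add_zero]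
          simp only [NFbr, hα, hsl0, one_mul, Fin.ext_iff, Fin.val_mk]
          split_ifs <;> first | rfl | (exfalso; omega)
      · have hsl : ∀ (h : 0 < n), (Pi.single l (1:ℂ) : Fin n → ℂ) ⟨0, h⟩ = 0 := by
          intro h
          rw [Pi.single_apply, if_neg]
          simp only [Fin.ext_iff, Fin.val_mk]
          omega
        have hz : NFbr n (Pi.single k 1) (Pi.single l 1) = 0 := by
          funext j
          rw [NFbr_single_left hn, hsl, zero_mul]
          rfl
        rw [hz, map_zero]
        funext j
        rw [Pi.zero_apply, Pi.add_apply, NFbr_single_left hn]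
        have h2 : d (Pi.single l 1) ⟨0, hn⟩ = 0 := by
          rw [hα,
            if_neg (show ¬ (⟨0, hn⟩ : Fin n) = l by
              simp only [Fin.ext_iff, Fin.val_mk]; omega),
            if_neg (show ¬ (l : ℕ) < ((⟨0, hn⟩ : Fin n) : ℕ) by
              simp only [Fin.val_mk]; omega)]
        rw [h2, zero_mul, add_zero]
        simp only [NFbr, hsl, zero_mul]
        split <;> rfl
    have heq : (NFB n).compr₂ d = (NFB n).comp d + (NFB n).compl₂ d := by
      apply LinearMap.ext_basis (Pi.basisFun ℂ (Fin n)) (Pi.basisFun ℂ (Fin n))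
      intro k l
      simp only [LinearMap.compr₂_apply, LinearMap.add_apply, LinearMap.comp_apply,
        LinearMap.compl₂_apply, Pi.basisFun_apply]
      exact key k l
    intro x y
    exact LinearMap.congr_fun (LinearMap.congr_fun heq x) y
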